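/- arXiv:2009.08089 — 4 statements merged into one kernel-verified Lean document; each statement's English description precedes it below -/
import Mathlib

section
/- Let α ∈ (0,1], let A ∈ ℝ^{m×n} with m ≥ n be a random matrix satisfying Assumption 1 (with parameter K), and suppose A x* = b for some x* ∈ ℝⁿ (the linear system is consistent). Then there exists a constant C_K > 0 depending only on K such that with probability at least 1 − 2·exp(−m), simultaneously for every x ∈ ℝⁿ, the bound |⟨a_i, x⟩ − b_i| ≤ (C_K/(α√n))·‖x − x*‖ holds for all but at most αm indices i ∈ [m]. -/
open MeasureTheory ProbabilityTheory Finset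
open scoped RealInnerProductSpace ENNReal NNReal BigOperators

noncomputable section

/-- The sub-Gaussian norm `‖X‖_{ψ₂} = inf {t > 0 : E exp(X²/t²) ≤ 2}` of a real random
variable `X` on `(Ω, μ)`. -/
def subgNorm {Ω : Type*} [MeasurableSpace Ω] (μ : Measure Ω) (X : Ω → ℝ) : ℝ :=
  sInf {t : ℝ | 0 < t ∧ ∫ ω, Real.exp (X ω ^ 2 / t ^ 2) ∂μ ≤ 2}

/-- Assumption 1: the rows `a_i = A ω i` of the random matrix `A` are independent unit
vectors, and each rescaled row `√n • a_i` is mean zero, isotropic and has sub-Gaussian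
norm at most `K` (i.e. `‖⟨√n • a_i, x⟩‖_{ψ₂} ≤ K` for every unit vector `x`). -/
structure Assumption1 {Ω : Type*} [MeasurableSpace Ω] (μ : Measure Ω)
    {m n : ℕ} (A : Ω → Fin m → EuclideanSpace ℝ (Fin n)) (K : ℝ) : Prop where
  measurableRows : ∀ i, Measurable fun ω => A ω i
  unitNorm : ∀ᵐ ω ∂μ, ∀ i, ‖A ω i‖ = 1
  indepRows : iIndepFun (fun i ω => A ω i) μ
  meanZero : ∀ i j, ∫ ω, Real.sqrt n * A ω i j ∂μ = 0
  isotropic : ∀ i j k, ∫ ω, (Real.sqrt n * A ω i j) * (Real.sqrt n * A ω i k) ∂μ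
      = if j = k then 1 else 0
  subgaussian : ∀ i, ∀ x : EuclideanSpace ℝ (Fin n), ‖x‖ = 1 →
      subgNorm μ (fun ω => ⟪Real.sqrt n • A ω i, x⟫) ≤ K

/-- Assumption 2: each entry `a_{ij} = A ω i j` of the random matrix has a probability
density function bounded pointwise by `D √n`. -/
def Assumption2 {Ω : Type*} [MeasurableSpace Ω] (μ : Measure Ω)
    {m n : ℕ} (A : Ω → Fin m → EuclideanSpace ℝ (Fin n)) (D : ℝ) : Prop :=
  ∀ i j, ∃ φ : ℝ → ℝ≥0∞,
    Measure.map (fun ω => A ω i j) μ = MeasureTheory.volume.withDensity φ ∧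
    ∀ t : ℝ, φ t ≤ ENNReal.ofReal (D * Real.sqrt n)

/-- The `q`-quantile of the multiset `{r 0, …, r (m-1)}`: its `⌊q·m⌋`-th smallest element
(1-indexed). -/
def quantile {m : ℕ} (q : ℝ) (r : Fin m → ℝ) : ℝ :=
  (Multiset.sort (Multiset.map r Finset.univ.val) (· ≤ ·)).getD (⌊q * (m : ℝ)⌋.toNat - 1) 0

/-- `sgn s = 1` if `s > 0` and `-1` otherwise. -/
def sgn (s : ℝ) : ℝ := if 0 < s then 1 else -1

/-- The optimal SGD step size `η*(x) = (1/m) ∑ᵢ sgn(⟨aᵢ,x⟩ - bᵢ)·⟨x - x*, aᵢ⟩`. -/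
def etaStar {m n : ℕ} (a : Fin m → EuclideanSpace ℝ (Fin n)) (b : Fin m → ℝ)
    (xstar x : EuclideanSpace ℝ (Fin n)) : ℝ :=
  (1 / m) * ∑ i, sgn (⟪a i, x⟫ - b i) * ⟪x - xstar, a i⟫


/- ==================== auxiliary lemmas ==================== -/

open Metric in
/-- Any `1/2`-separated set of unit vectors in `ℝⁿ` has at most `5 ^ n` elements. -/
lemma medCorAux.sep_card_le {n : ℕ} (hn : 0 < n) (s : Finset (EuclideanSpace ℝ (Fin n)))
    (hs1 : ∀ u ∈ s, ‖u‖ = 1)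
    (hs2 : ∀ u ∈ s, ∀ v ∈ s, u ≠ v → (1:ℝ)/2 ≤ dist u v) :
    s.card ≤ 5 ^ n := by
  haveI : Nontrivial (EuclideanSpace ℝ (Fin n)) := by
    refine nontrivial_of_ne (EuclideanSpace.single ⟨0, hn⟩ (1:ℝ)) 0 ?_
    intro h
    have := congrArg (fun v : EuclideanSpace ℝ (Fin n) => v ⟨0, hn⟩) h
    simp [EuclideanSpace.single] at this
  have hdisj : (s : Set (EuclideanSpace ℝ (Fin n))).PairwiseDisjoint
      (fun u => ball u (1/4)) := by
    intro u hu v hv huv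
    apply ball_disjoint_ball
    linarith [hs2 u hu v hv huv]
  have hsub : (⋃ u ∈ s, ball u (1/4)) ⊆ ball (0 : EuclideanSpace ℝ (Fin n)) (5/4) := by
    intro y hy
    simp only [Set.mem_iUnion] at hy
    obtain ⟨u, hu, hy⟩ := hy
    rw [mem_ball] at hy ⊢
    have h1 : dist y (0:EuclideanSpace ℝ (Fin n)) ≤ dist y u + dist u 0 := dist_triangle _ _ _
    have h2 : dist u (0:EuclideanSpace ℝ (Fin n)) = 1 := by
      rw [dist_zero_right]; exact hs1 u hu
    linarith
  have hballs : ∀ x : EuclideanSpace ℝ (Fin n), volume (ball x (1/4))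
      = ENNReal.ofReal ((1/4) ^ n) * volume (ball (0:EuclideanSpace ℝ (Fin n)) 1) := by
    intro x
    rw [Measure.addHaar_ball volume x (by norm_num : (0:ℝ) ≤ 1/4)]
    norm_num [finrank_euclideanSpace_fin]
  have hsum : (s.card : ℝ≥0∞) * (ENNReal.ofReal ((1/4:ℝ) ^ n)
        * volume (ball (0:EuclideanSpace ℝ (Fin n)) 1))
      ≤ ENNReal.ofReal ((5/4) ^ n) * volume (ball (0:EuclideanSpace ℝ (Fin n)) 1) := by
    calc (s.card : ℝ≥0∞) * (ENNReal.ofReal ((1/4:ℝ) ^ n)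
          * volume (ball (0:EuclideanSpace ℝ (Fin n)) 1))
        = ∑ u ∈ s, volume (ball u (1/4)) := by
          rw [Finset.sum_congr rfl fun u _ => hballs u]
          simp [Finset.sum_const, nsmul_eq_mul]
      _ = volume (⋃ u ∈ s, ball u (1/4)) :=
          (measure_biUnion_finset hdisj fun u _ => measurableSet_ball).symm
      _ ≤ volume (ball (0:EuclideanSpace ℝ (Fin n)) (5/4)) := measure_mono hsub
      _ = ENNReal.ofReal ((5/4) ^ n) * volume (ball (0:EuclideanSpace ℝ (Fin n)) 1) := by
          rw [Measure.addHaar_ball volume _ (by norm_num : (0:ℝ) ≤ 5/4)]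
          norm_num [finrank_euclideanSpace_fin]
  rw [← mul_assoc] at hsum
  have hv0 : volume (ball (0:EuclideanSpace ℝ (Fin n)) 1) ≠ 0 :=
    (measure_ball_pos volume _ one_pos).ne'
  have hvt : volume (ball (0:EuclideanSpace ℝ (Fin n)) 1) ≠ ⊤ := measure_ball_lt_top.ne
  have h2 : (s.card : ℝ≥0∞) * ENNReal.ofReal ((1/4:ℝ) ^ n) ≤ ENNReal.ofReal ((5/4) ^ n) :=
    (ENNReal.mul_le_mul_iff_left hv0 hvt).1 hsum
  have h3 : (s.card : ℝ) * (1/4:ℝ) ^ n ≤ (5/4) ^ n := by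
    have h4 := ENNReal.toReal_mono (by simp) h2
    rw [ENNReal.toReal_mul, ENNReal.toReal_ofReal (by positivity),
      ENNReal.toReal_ofReal (by positivity)] at h4
    simpa using h4
  have h4 : (s.card : ℝ) ≤ 5 ^ n := by
    have hpow : ((5:ℝ)/4) ^ n = 5 ^ n * (1/4) ^ n := by
      rw [← mul_pow]; norm_num
    rw [hpow] at h3
    have hpos : (0:ℝ) < (1/4) ^ n := by positivity
    calc (s.card : ℝ) = s.card * (1/4)^n / (1/4)^n := by field_simp
      _ ≤ 5 ^ n * (1/4)^n / (1/4)^n := by gcongr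
      _ = 5 ^ n := by field_simp
  exact_mod_cast h4

/-- There is a `1/2`-net of the unit sphere of `ℝⁿ` of cardinality at most `5 ^ n`. -/
lemma medCorAux.exists_net (n : ℕ) (hn : 0 < n) :
    ∃ N : Finset (EuclideanSpace ℝ (Fin n)), N.card ≤ 5 ^ n ∧
      (∀ u ∈ N, ‖u‖ = 1) ∧
      ∀ x : EuclideanSpace ℝ (Fin n), ‖x‖ = 1 → ∃ u ∈ N, ‖x - u‖ ≤ 1/2 := by
  classical
  set P : Finset (EuclideanSpace ℝ (Fin n)) → Prop := fun s => (∀ u ∈ s, ‖u‖ = 1) ∧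
    ∀ u ∈ s, ∀ v ∈ s, u ≠ v → (1:ℝ)/2 ≤ dist u v with hP
  set Q : ℕ → Prop := fun k => ∃ s, P s ∧ s.card = k with hQ
  have hQ0 : Q 0 := ⟨∅, ⟨by simp, by simp⟩, by simp⟩
  set k := Nat.findGreatest Q (5 ^ n) with hk
  have hQk : Q k := Nat.findGreatest_spec (Nat.zero_le _) hQ0
  obtain ⟨s, hPs, hcard⟩ := hQk
  refine ⟨s, ?_, hPs.1, ?_⟩
  · rw [hcard]; exact Nat.findGreatest_le _
  · intro x hx
    by_contra hcon
    push_neg at hcon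
    have hxs : x ∉ s := by
      intro hxs
      have := hcon x hxs
      simp at this
      linarith
    have hP' : P (insert x s) := by
      constructor
      · intro u hu
        rcases Finset.mem_insert.1 hu with rfl | hu
        · exact hx
        · exact hPs.1 u hu
      · intro u hu v hv huv
        rcases Finset.mem_insert.1 hu with rfl | hu
        · rcases Finset.mem_insert.1 hv with rfl | hv
          · exact absurd rfl huv
          · rw [dist_eq_norm]; exact (hcon v hv).le
        · rcases Finset.mem_insert.1 hv with hv' | hv
          · rw [hv', dist_comm, dist_eq_norm]; exact (hcon u hu).le
          · exact hPs.2 u hu v hv huv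
    have hle : k + 1 ≤ 5 ^ n := by
      have := medCorAux.sep_card_le hn (insert x s) hP'.1 hP'.2
      rwa [Finset.card_insert_of_notMem hxs, hcard] at this
    have : k + 1 ≤ k := Nat.le_findGreatest hle ⟨_, hP', by
      rw [Finset.card_insert_of_notMem hxs, hcard]⟩
    omega

set_option maxHeartbeats 1000000 in
/-- A bound on `∑ i, ⟪a i, u⟫²` over a `1/2`-net of the sphere extends to the whole
sphere, at the cost of a factor `4`. -/
lemma medCorAux.net_bound {n m : ℕ} (N : Finset (EuclideanSpace ℝ (Fin n)))
    (hNnet : ∀ x : EuclideanSpace ℝ (Fin n), ‖x‖ = 1 → ∃ u ∈ N, ‖x - u‖ ≤ 1/2)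
    (a : Fin m → EuclideanSpace ℝ (Fin n)) {B : ℝ} (hB : 0 ≤ B)
    (h : ∀ u ∈ N, ∑ i, ⟪a i, u⟫ ^ 2 ≤ B)
    (x : EuclideanSpace ℝ (Fin n)) (hx : ‖x‖ = 1) :
    ∑ i, ⟪a i, x⟫ ^ 2 ≤ 4 * B := by
  classical
  set g : EuclideanSpace ℝ (Fin n) →ₗ[ℝ] EuclideanSpace ℝ (Fin m) :=
    { toFun := fun z => (WithLp.toLp 2 (fun i => ⟪a i, z⟫) : EuclideanSpace ℝ (Fin m))
      map_add' := by
        intro y z; ext i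
        simp [inner_add_right]
      map_smul' := by
        intro c z; ext i
        simp [inner_smul_right] } with hg
  set G : EuclideanSpace ℝ (Fin n) →L[ℝ] EuclideanSpace ℝ (Fin m) :=
    LinearMap.toContinuousLinearMap g with hG
  have hGnorm : ∀ z : EuclideanSpace ℝ (Fin n), ‖G z‖ ^ 2 = ∑ i, ⟪a i, z⟫ ^ 2 := by
    intro z
    rw [EuclideanSpace.norm_eq, Real.sq_sqrt (by positivity)]
    simp only [G, g, LinearMap.coe_toContinuousLinearMap', LinearMap.coe_mk, AddHom.coe_mk, WithLp.ofLp_toLp]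
    refine Finset.sum_congr rfl fun i _ => ?_
    rw [Real.norm_eq_abs, sq_abs]
  have hGz : ∀ z : EuclideanSpace ℝ (Fin n), ‖z‖ = 1 →
      ∃ u ∈ N, ‖G z‖ ≤ Real.sqrt B + ‖G‖ * (1/2) := by
    intro z hz
    obtain ⟨u, huN, hu⟩ := hNnet z hz
    refine ⟨u, huN, ?_⟩
    have h1 : ‖G u‖ ≤ Real.sqrt B := by
      have : ‖G u‖ ^ 2 ≤ B := by rw [hGnorm]; exact h u huN
      nlinarith [norm_nonneg (G u), Real.sq_sqrt hB, Real.sqrt_nonneg B]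
    have h2 : ‖G (z - u)‖ ≤ ‖G‖ * ‖z - u‖ := G.le_opNorm _
    have h3 : ‖G z‖ ≤ ‖G u‖ + ‖G (z - u)‖ := by
      have : G z = G u + G (z - u) := by rw [← map_add]; congr 1; abel
      rw [this]; exact norm_add_le _ _
    have h4 : ‖G‖ * ‖z - u‖ ≤ ‖G‖ * (1/2) :=
      mul_le_mul_of_nonneg_left hu (norm_nonneg _)
    linarith
  have hop : ‖G‖ ≤ Real.sqrt B + ‖G‖ * (1/2) := by
    apply ContinuousLinearMap.opNorm_le_bound
    · have := norm_nonneg G; positivity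
    · intro z
      rcases eq_or_ne z 0 with rfl | hz
      · simp
      · have hzn : ‖z‖ ≠ 0 := norm_ne_zero_iff.2 hz
        have hunit : ‖(‖z‖⁻¹ • z : EuclideanSpace ℝ (Fin n))‖ = 1 := norm_smul_inv_norm hz
        obtain ⟨u, _, hle⟩ := hGz _ hunit
        have heq : ‖G (‖z‖⁻¹ • z)‖ = ‖z‖⁻¹ * ‖G z‖ := by
          rw [G.map_smul, norm_smul]
          simp [abs_of_nonneg (inv_nonneg.2 (norm_nonneg z))]
        rw [heq] at hle
        have hzpos : 0 < ‖z‖ := (norm_nonneg z).lt_of_ne' hzn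
        calc ‖G z‖ = ‖z‖ * (‖z‖⁻¹ * ‖G z‖) := by field_simp
          _ ≤ (Real.sqrt B + ‖G‖ * (1/2)) * ‖z‖ := by
              rw [mul_comm]
              exact mul_le_mul_of_nonneg_right hle hzpos.le
  have hop2 : ‖G‖ ≤ 2 * Real.sqrt B := by linarith
  have hGx := hGnorm x
  have hx2 : ‖G x‖ ≤ 2 * Real.sqrt B := by
    calc ‖G x‖ ≤ ‖G‖ * ‖x‖ := G.le_opNorm x
      _ = ‖G‖ := by rw [hx, mul_one]
      _ ≤ 2 * Real.sqrt B := hop2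
  rw [← hGx]
  nlinarith [norm_nonneg (G x), Real.sq_sqrt hB, Real.sqrt_nonneg B]

/-- The mgf of `⟪√n aᵢ, u⟫²` at `(K+1)⁻²` is at most `2`, for a unit vector `u`. -/
lemma medCorAux.mgf_le_two {Ω : Type} [MeasurableSpace Ω] {μ : Measure Ω}
    [IsProbabilityMeasure μ]
    {m n : ℕ} (hn : 0 < n) {A : Ω → Fin m → EuclideanSpace ℝ (Fin n)} {K : ℝ} (hK : 0 < K)
    (hA : Assumption1 μ A K) (i : Fin m) (u : EuclideanSpace ℝ (Fin n)) (hu : ‖u‖ = 1) :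
    mgf (fun ω => (Real.sqrt n * ⟪A ω i, u⟫) ^ 2) μ (((K+1)^2)⁻¹) ≤ 2 := by
  set f : Ω → ℝ := fun ω => Real.sqrt n * ⟪A ω i, u⟫ with hf
  have hf_meas : Measurable f :=
    measurable_const.mul ((hA.measurableRows i).inner measurable_const)
  have hbound : ∀ᵐ ω ∂μ, f ω ^ 2 ≤ n := by
    filter_upwards [hA.unitNorm] with ω hω
    have h1 : |⟪A ω i, u⟫| ≤ 1 := by
      have := abs_real_inner_le_norm (A ω i) u
      rw [hω i, hu] at this; simpa using this
    have h2 : ⟪A ω i, u⟫ ^ 2 ≤ 1 := by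
      rw [← sq_abs]
      nlinarith [abs_nonneg (⟪A ω i, u⟫ : ℝ)]
    have h3 : f ω ^ 2 = (n : ℝ) * ⟪A ω i, u⟫ ^ 2 := by
      rw [hf]; simp only [mul_pow]
      rw [Real.sq_sqrt (Nat.cast_nonneg n)]
    rw [h3]; nlinarith [Nat.cast_nonneg (α := ℝ) n]
  have hint : ∀ c : ℝ, 0 < c → Integrable (fun ω => Real.exp (f ω ^ 2 / c)) μ := by
    intro c hc
    refine Integrable.mono' (integrable_const (Real.exp (n / c)))
      ((hf_meas.pow_const 2).div_const c).exp.aestronglyMeasurable ?_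
    filter_upwards [hbound] with ω hω
    rw [Real.norm_eq_abs, abs_of_pos (Real.exp_pos _)]
    exact Real.exp_le_exp.2 (by gcongr)
  have hlog2 : (0:ℝ) < Real.log 2 := Real.log_pos (by norm_num)
  have hS0 : Real.sqrt ((n:ℝ) / Real.log 2) ∈
      {t : ℝ | 0 < t ∧ ∫ ω, Real.exp (f ω ^ 2 / t ^ 2) ∂μ ≤ 2} := by
    constructor
    · apply Real.sqrt_pos.2
      positivity
    · have ht2 : (Real.sqrt ((n:ℝ) / Real.log 2)) ^ 2 = (n:ℝ) / Real.log 2 :=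
        Real.sq_sqrt (by positivity)
      have hle : ∀ᵐ ω ∂μ, Real.exp (f ω ^ 2 / (Real.sqrt ((n:ℝ) / Real.log 2)) ^ 2) ≤ 2 := by
        filter_upwards [hbound] with ω hω
        rw [ht2]
        have hnpos : (0:ℝ) < n := by exact_mod_cast hn
        have hq : f ω ^ 2 / ((n:ℝ) / Real.log 2) ≤ Real.log 2 := by
          rw [div_le_iff₀ (by positivity)]
          calc f ω ^ 2 ≤ n := hω
            _ = Real.log 2 * ((n:ℝ) / Real.log 2) := by field_simp
        calc Real.exp (f ω ^ 2 / ((n:ℝ) / Real.log 2)) ≤ Real.exp (Real.log 2) :=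
              Real.exp_le_exp.2 hq
          _ = 2 := Real.exp_log (by norm_num)
      calc ∫ ω, Real.exp (f ω ^ 2 / (Real.sqrt ((n:ℝ) / Real.log 2)) ^ 2) ∂μ
          ≤ ∫ _ω, (2:ℝ) ∂μ := by
            apply integral_mono_of_nonneg
            · filter_upwards with ω; positivity
            · exact integrable_const 2
            · exact hle
        _ = 2 := by simp
  have hsub : subgNorm μ f ≤ K := by
    have hs := hA.subgaussian i u hu
    have heq : (fun ω => ⟪Real.sqrt n • A ω i, u⟫) = f := by
      funext ω; rw [real_inner_smul_left]
    rwa [heq] at hs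
  have hbdd : BddBelow {t : ℝ | 0 < t ∧ ∫ ω, Real.exp (f ω ^ 2 / t ^ 2) ∂μ ≤ 2} :=
    ⟨0, fun t ht => ht.1.le⟩
  have hlt : sInf {t : ℝ | 0 < t ∧ ∫ ω, Real.exp (f ω ^ 2 / t ^ 2) ∂μ ≤ 2} < K + 1 :=
    lt_of_le_of_lt hsub (by linarith)
  obtain ⟨t, ht, htK⟩ := (csInf_lt_iff hbdd ⟨_, hS0⟩).1 hlt
  obtain ⟨ht0, htint⟩ := ht
  set θ : ℝ := t ^ 2 / (K+1) ^ 2 with hθ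
  have hK1 : (0:ℝ) < K + 1 := by linarith
  have hθ0 : 0 < θ := by positivity
  have hθ1 : θ ≤ 1 := by
    rw [hθ, div_le_one (by positivity)]
    nlinarith
  have hpt : ∀ ω, Real.exp (((K+1)^2)⁻¹ * f ω ^ 2) ≤
      θ * Real.exp (f ω ^ 2 / t ^ 2) + (1 - θ) * 1 := by
    intro ω
    have he : ((K+1)^2)⁻¹ * f ω ^ 2 = (f ω ^ 2 / t ^ 2) * θ := by
      rw [hθ]; field_simp
    rw [he, Real.exp_mul]
    calc Real.exp (f ω ^ 2 / t ^ 2) ^ θ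
        = Real.exp (f ω ^ 2 / t ^ 2) ^ θ * (1:ℝ) ^ (1 - θ) := by
          rw [Real.one_rpow, mul_one]
      _ ≤ θ * Real.exp (f ω ^ 2 / t ^ 2) + (1 - θ) * 1 :=
          Real.geom_mean_le_arith_mean2_weighted hθ0.le (by linarith)
            (Real.exp_pos _).le zero_le_one (by ring)
  have hmono : mgf (fun ω => f ω ^ 2) μ (((K+1)^2)⁻¹) ≤
      θ * (∫ ω, Real.exp (f ω ^ 2 / t ^ 2) ∂μ) + (1 - θ) := by
    rw [mgf]
    have hrhs : Integrable (fun ω => θ * Real.exp (f ω ^ 2 / t ^ 2) + (1 - θ) * 1) μ :=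
      ((hint _ (by positivity)).const_mul θ).add (integrable_const _)
    calc ∫ ω, Real.exp (((K+1)^2)⁻¹ * f ω ^ 2) ∂μ
        ≤ ∫ ω, (θ * Real.exp (f ω ^ 2 / t ^ 2) + (1 - θ) * 1) ∂μ := by
          apply integral_mono_of_nonneg
          · filter_upwards with ω; positivity
          · exact hrhs
          · filter_upwards with ω; exact hpt ω
      _ = θ * (∫ ω, Real.exp (f ω ^ 2 / t ^ 2) ∂μ) + (1 - θ) := by
          rw [integral_add ((hint _ (by positivity)).const_mul θ) (integrable_const _)]
          rw [MeasureTheory.integral_const_mul, integral_const]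
          simp
  calc mgf (fun ω => (Real.sqrt n * ⟪A ω i, u⟫) ^ 2) μ (((K+1)^2)⁻¹)
      ≤ θ * (∫ ω, Real.exp (f ω ^ 2 / t ^ 2) ∂μ) + (1 - θ) := hmono
    _ ≤ θ * 2 + (1 - θ) := by nlinarith
    _ ≤ 2 := by linarith

set_option maxHeartbeats 1000000 in
/-- Chernoff bound for the sum `∑ i, ⟪√n aᵢ, u⟫²` at a fixed unit vector `u`. -/
lemma medCorAux.chernoff_net {Ω : Type} [MeasurableSpace Ω] {μ : Measure Ω}
    [IsProbabilityMeasure μ]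
    {m n : ℕ} (hn : 0 < n) {A : Ω → Fin m → EuclideanSpace ℝ (Fin n)} {K : ℝ}
    (hK : 0 < K) (hA : Assumption1 μ A K) (u : EuclideanSpace ℝ (Fin n)) (hu : ‖u‖ = 1) :
    μ {ω | (K+1)^2 * (Real.log 2 + Real.log 5 + 2) * m ≤
        ∑ i, (Real.sqrt n * ⟪A ω i, u⟫) ^ 2} ≤
      ENNReal.ofReal (Real.exp (-(2:ℝ) * m) / 5 ^ m) := by
  classical
  set L : ℝ := Real.log 2 + Real.log 5 + 2 with hL
  have hLpos : 0 < L := by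
    have h2 : (0:ℝ) < Real.log 2 := Real.log_pos (by norm_num)
    have h5 : (0:ℝ) < Real.log 5 := Real.log_pos (by norm_num)
    rw [hL]; linarith
  have hK1 : (0:ℝ) < K + 1 := by linarith
  set lam : ℝ := ((K+1)^2)⁻¹ with hlam
  have hlam0 : 0 < lam := by positivity
  set X : Fin m → Ω → ℝ := fun i ω => (Real.sqrt n * ⟪A ω i, u⟫) ^ 2 with hX
  have hXmeas : ∀ i, Measurable (X i) := fun i =>
    (measurable_const.mul ((hA.measurableRows i).inner measurable_const)).pow_const 2
  have hXbound : ∀ᵐ ω ∂μ, ∀ i, X i ω ≤ n := by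
    filter_upwards [hA.unitNorm] with ω hω i
    have h1 : |⟪A ω i, u⟫| ≤ 1 := by
      have := abs_real_inner_le_norm (A ω i) u
      rw [hω i, hu] at this; simpa using this
    have h2 : ⟪A ω i, u⟫ ^ 2 ≤ 1 := by
      rw [← sq_abs]; nlinarith [abs_nonneg (⟪A ω i, u⟫ : ℝ)]
    have h3 : X i ω = (n : ℝ) * ⟪A ω i, u⟫ ^ 2 := by
      rw [hX]; simp only [mul_pow]
      rw [Real.sq_sqrt (Nat.cast_nonneg n)]
    rw [h3]; nlinarith [Nat.cast_nonneg (α := ℝ) n]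
  have hindep : iIndepFun X μ := by
    have := hA.indepRows.comp (fun _ (v : EuclideanSpace ℝ (Fin n)) =>
      (Real.sqrt n * ⟪v, u⟫) ^ 2) (fun _ =>
        (measurable_const.mul (measurable_id.inner measurable_const)).pow_const 2)
    exact this
  set Ssum : Ω → ℝ := fun ω => ∑ i, X i ω with hSsum
  have hSeq : Ssum = ∑ i, X i := by
    funext ω; rw [Finset.sum_apply]
  have hint : Integrable (fun ω => Real.exp (lam * Ssum ω)) μ := by
    refine Integrable.mono' (integrable_const (Real.exp (lam * (m * n))))
      ?_ ?_
    · exact (((Finset.univ.measurable_sum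
        (fun i _ => hXmeas i)).const_mul lam).exp).aestronglyMeasurable
    · filter_upwards [hXbound] with ω hω
      rw [Real.norm_eq_abs, abs_of_pos (Real.exp_pos _)]
      apply Real.exp_le_exp.2
      apply mul_le_mul_of_nonneg_left _ hlam0.le
      calc Ssum ω ≤ ∑ _i : Fin m, (n:ℝ) := Finset.sum_le_sum fun i _ => hω i
        _ = m * n := by simp [mul_comm]
  have hchern := measure_ge_le_exp_mul_mgf (X := Ssum) (μ := μ)
    ((K+1)^2 * L * m) hlam0.le hint
  have hmgf : mgf Ssum μ lam ≤ 2 ^ m := by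
    rw [hSeq, hindep.mgf_sum hXmeas]
    calc ∏ i, mgf (X i) μ lam ≤ ∏ _i : Fin m, (2:ℝ) :=
          Finset.prod_le_prod (fun i _ => mgf_nonneg)
            (fun i _ => medCorAux.mgf_le_two hn hK hA i u hu)
      _ = 2 ^ m := by simp
  have harith : Real.exp (-lam * ((K+1)^2 * L * m)) * 2 ^ m
      = Real.exp (-(2:ℝ) * m) / 5 ^ m := by
    have h2 : (2:ℝ) ^ m = Real.exp (m * Real.log 2) := by
      rw [Real.exp_nat_mul, Real.exp_log]; norm_num
    have h5 : (5:ℝ) ^ m = Real.exp (m * Real.log 5) := by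
      rw [Real.exp_nat_mul, Real.exp_log]; norm_num
    have hlamL : lam * ((K+1)^2 * L * m) = L * m := by
      rw [hlam]; field_simp
    rw [h2, h5, ← Real.exp_add, ← Real.exp_sub]
    congr 1
    have hneg : -lam * ((K+1)^2 * L * m) = -(L * m) := by
      rw [neg_mul, hlamL]
    rw [hneg, hL]; ring
  have htoReal : (μ {ω | (K+1)^2 * L * m ≤ Ssum ω}).toReal
      ≤ Real.exp (-(2:ℝ) * m) / 5 ^ m := by
    calc (μ {ω | (K+1)^2 * L * m ≤ Ssum ω}).toReal
        ≤ Real.exp (-lam * ((K+1)^2 * L * m)) * mgf Ssum μ lam := hchern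
      _ ≤ Real.exp (-lam * ((K+1)^2 * L * m)) * 2 ^ m :=
          mul_le_mul_of_nonneg_left hmgf (Real.exp_pos _).le
      _ = Real.exp (-(2:ℝ) * m) / 5 ^ m := harith
  calc μ {ω | (K+1)^2 * L * m ≤ Ssum ω}
      = ENNReal.ofReal ((μ {ω | (K+1)^2 * L * m ≤ Ssum ω}).toReal) :=
        (ENNReal.ofReal_toReal (measure_ne_top μ _)).symm
    _ ≤ ENNReal.ofReal (Real.exp (-(2:ℝ) * m) / 5 ^ m) := ENNReal.ofReal_le_ofReal htoReal


set_option maxHeartbeats 1000000 in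
/-- (Corollary `med_cor`). For a consistent system `b = A x*` with `A` a
random matrix with `m ≥ n` satisfying Assumption 1 and `α ∈ (0,1]`, with probability at
least `1 - 2exp(-m)`, simultaneously for every `x ∈ ℝⁿ`, the bound
`|⟨aᵢ,x⟩ - bᵢ| ≤ (C_K/(α√n))·‖x - x*‖` holds for all but at most `αm` indices `i`. -/
theorem med_cor :
    ∀ K : ℝ, 0 < K →
    ∃ CK : ℝ, 0 < CK ∧
    ∀ (α : ℝ), 0 < α → α ≤ 1 →
    ∀ (Ω : Type) (_ : MeasurableSpace Ω) (μ : Measure Ω), IsProbabilityMeasure μ →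
    ∀ (m n : ℕ), 0 < n → n ≤ m →
    ∀ A : Ω → Fin m → EuclideanSpace ℝ (Fin n), Assumption1 μ A K →
    ∀ xstar : EuclideanSpace ℝ (Fin n),
    ENNReal.ofReal (1 - 2 * Real.exp (-(m : ℝ))) ≤
      μ {ω | ∀ x : EuclideanSpace ℝ (Fin n),
          ((Finset.univ.filter fun i =>
              ¬ |⟪A ω i, x⟫ - ⟪A ω i, xstar⟫| ≤
                CK / (α * Real.sqrt n) * ‖x - xstar‖).card : ℝ) ≤ α * m} := by
  intro K hK
  set L : ℝ := Real.log 2 + Real.log 5 + 2 with hL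
  have hlog2 : (0:ℝ) < Real.log 2 := Real.log_pos (by norm_num)
  have hlog5 : (0:ℝ) < Real.log 5 := Real.log_pos (by norm_num)
  have hLpos : 0 < L := by rw [hL]; linarith
  have hK1 : (0:ℝ) < K + 1 := by linarith
  refine ⟨2 * (K + 1) * Real.sqrt L, by positivity, ?_⟩
  intro α hα0 hα1 Ω mΩ μ hμ m n hn hnm A hA xstar
  classical
  set CK : ℝ := 2 * (K + 1) * Real.sqrt L with hCK
  have hCKpos : 0 < CK := by positivity
  have hCK2 : CK ^ 2 = 4 * ((K+1)^2 * L) := by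
    rw [hCK, mul_pow, mul_pow, Real.sq_sqrt hLpos.le]; ring
  obtain ⟨N, hNcard, hNunit, hNnet⟩ := medCorAux.exists_net n hn
  set bad : Set Ω := ⋃ u ∈ N,
    {ω | (K+1)^2 * L * m ≤ ∑ i, (Real.sqrt n * ⟪A ω i, u⟫) ^ 2} with hbadDef
  have hbad : μ bad ≤ ENNReal.ofReal (Real.exp (-(2:ℝ) * m)) := by
    have h5m : (0:ℝ) < 5 ^ m := by positivity
    calc μ bad
        ≤ ∑ u ∈ N, μ {ω | (K+1)^2 * L * m ≤ ∑ i, (Real.sqrt n * ⟪A ω i, u⟫) ^ 2} :=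
          measure_biUnion_finset_le N _
      _ ≤ ∑ _u ∈ N, ENNReal.ofReal (Real.exp (-(2:ℝ) * m) / 5 ^ m) :=
          Finset.sum_le_sum fun u hu => medCorAux.chernoff_net hn hK hA u (hNunit u hu)
      _ = (N.card : ℝ≥0∞) * ENNReal.ofReal (Real.exp (-(2:ℝ) * m) / 5 ^ m) := by
          rw [Finset.sum_const, nsmul_eq_mul]
      _ ≤ ((5 ^ m : ℕ) : ℝ≥0∞) * ENNReal.ofReal (Real.exp (-(2:ℝ) * m) / 5 ^ m) := by
          refine mul_le_mul_left ?_ _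
          exact_mod_cast Nat.cast_le.2
            (hNcard.trans (Nat.pow_le_pow_right (by norm_num) hnm))
      _ = ENNReal.ofReal (((5 ^ m : ℕ) : ℝ) * (Real.exp (-(2:ℝ) * m) / 5 ^ m)) := by
          rw [ENNReal.ofReal_mul (by positivity), ENNReal.ofReal_natCast]
      _ = ENNReal.ofReal (Real.exp (-(2:ℝ) * m)) := by
          congr 1
          push_cast
          field_simp
  set U : Set Ω := {ω | ∀ i, ‖A ω i‖ = 1} with hUdef
  have hUmeas : MeasurableSet U := by
    have : U = ⋂ i, {ω | ‖A ω i‖ = 1} := by ext ω; simp [hUdef]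
    rw [this]
    exact MeasurableSet.iInter fun i =>
      ((hA.measurableRows i).norm) (measurableSet_singleton 1)
  have hbadmeas : MeasurableSet bad := by
    refine Set.Finite.measurableSet_biUnion N.finite_toSet fun u _ => ?_
    exact measurableSet_le measurable_const (Finset.univ.measurable_sum fun i _ =>
      (measurable_const.mul ((hA.measurableRows i).inner measurable_const)).pow_const 2)
  have hUc : μ Uᶜ = 0 := by
    have h : Uᶜ = {ω | ¬ ∀ i, ‖A ω i‖ = 1} := by ext ω; simp [hUdef]
    rw [h]
    exact ae_iff.1 hA.unitNorm
  -- the good event is included in the target event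
  have hGsub : U ∩ badᶜ ⊆ {ω | ∀ x : EuclideanSpace ℝ (Fin n),
      ((Finset.univ.filter fun i =>
          ¬ |⟪A ω i, x⟫ - ⟪A ω i, xstar⟫| ≤
            CK / (α * Real.sqrt n) * ‖x - xstar‖).card : ℝ) ≤ α * m} := by
    rintro ω ⟨hunit, hnb⟩
    have hunit' : ∀ i, ‖A ω i‖ = 1 := hunit
    have hnot : ∀ u ∈ N, ∑ i, (Real.sqrt n * ⟪A ω i, u⟫) ^ 2 ≤ (K+1)^2 * L * m := by
      intro u hu
      have hnb' : ω ∉ bad := hnb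
      simp only [hbadDef, Set.mem_iUnion, Set.mem_setOf_eq, exists_prop, not_exists,
        not_and] at hnb'
      exact (not_le.1 (hnb' u hu)).le
    have hkey : ∀ y : EuclideanSpace ℝ (Fin n), ‖y‖ = 1 →
        ∑ i, ⟪(Real.sqrt n • A ω i : EuclideanSpace ℝ (Fin n)), y⟫ ^ 2
          ≤ 4 * ((K+1)^2 * L * m) := by
      intro y hy
      refine medCorAux.net_bound N hNnet (fun i => Real.sqrt n • A ω i)
        (by positivity) ?_ y hy
      intro u hu
      have := hnot u hu
      simpa only [real_inner_smul_left] using this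
    intro x
    rcases eq_or_ne x xstar with rfl | hx
    · have hemp : (Finset.univ.filter fun i : Fin m =>
          ¬ |⟪A ω i, x⟫ - ⟪A ω i, x⟫| ≤ CK / (α * Real.sqrt n) * ‖x - x‖) = ∅ := by
        rw [Finset.filter_eq_empty_iff]
        intro i _
        rw [not_not, sub_self, sub_self, abs_zero, norm_zero, mul_zero]
      rw [hemp]
      simp only [Finset.card_empty, Nat.cast_zero]
      positivity
    · set v : EuclideanSpace ℝ (Fin n) := x - xstar with hv
      have hvne : v ≠ 0 := sub_ne_zero.2 hx
      have hvpos : 0 < ‖v‖ := norm_pos_iff.2 hvne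
      set u : EuclideanSpace ℝ (Fin n) := ‖v‖⁻¹ • v with hu
      have huunit : ‖u‖ = 1 := norm_smul_inv_norm hvne
      have h4 := hkey u huunit
      set s : ℝ := Real.sqrt n with hs
      have hspos : 0 < s := Real.sqrt_pos.2 (by exact_mod_cast hn)
      set F := Finset.univ.filter fun i : Fin m =>
        ¬ |⟪A ω i, x⟫ - ⟪A ω i, xstar⟫| ≤ CK / (α * s) * ‖x - xstar‖ with hF
      have hterm : ∀ i ∈ F, CK^2 / α^2 ≤ ⟪(s • A ω i : EuclideanSpace ℝ (Fin n)), u⟫ ^ 2 := by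
        intro i hi
        have hcond := (Finset.mem_filter.1 hi).2
        have hsub2 : ⟪A ω i, x⟫ - ⟪A ω i, xstar⟫ = ⟪A ω i, v⟫ := by
          rw [hv, inner_sub_right]
        rw [hsub2] at hcond
        have hlt : CK / (α * s) * ‖v‖ < |⟪A ω i, v⟫| := by
          rw [← hv] at hcond
          exact not_le.1 hcond
        have hsq : (CK / (α * s) * ‖v‖)^2 < ⟪A ω i, v⟫ ^ 2 := by
          have hh := mul_self_lt_mul_self (by positivity) hlt
          rw [← pow_two, ← pow_two, sq_abs] at hh
          exact hh
        have hinner : ⟪(s • A ω i : EuclideanSpace ℝ (Fin n)), u⟫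
            = s * (‖v‖⁻¹ * ⟪A ω i, v⟫) := by
          rw [hu, real_inner_smul_left, real_inner_smul_right]
        rw [hinner]
        have hid : CK^2 / α^2 = (s^2 * (‖v‖⁻¹)^2) * (CK / (α * s) * ‖v‖)^2 := by
          field_simp
        have hgoal2 : (s * (‖v‖⁻¹ * ⟪A ω i, v⟫))^2
            = (s^2 * (‖v‖⁻¹)^2) * ⟪A ω i, v⟫ ^ 2 := by ring
        rw [hid, hgoal2]
        exact mul_le_mul_of_nonneg_left hsq.le (by positivity)
      have hsumlb : (F.card : ℝ) * (CK^2 / α^2)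
          ≤ ∑ i, ⟪(s • A ω i : EuclideanSpace ℝ (Fin n)), u⟫ ^ 2 := by
        calc (F.card : ℝ) * (CK^2 / α^2) = ∑ _i ∈ F, CK^2 / α^2 := by
              rw [Finset.sum_const, nsmul_eq_mul]
          _ ≤ ∑ i ∈ F, ⟪(s • A ω i : EuclideanSpace ℝ (Fin n)), u⟫ ^ 2 :=
              Finset.sum_le_sum hterm
          _ ≤ ∑ i, ⟪(s • A ω i : EuclideanSpace ℝ (Fin n)), u⟫ ^ 2 :=
              Finset.sum_le_sum_of_subset_of_nonneg (Finset.subset_univ F)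
                (fun i _ _ => sq_nonneg _)
      have hmain : (F.card : ℝ) * (CK^2 / α^2) ≤ CK^2 * m := by
        calc (F.card : ℝ) * (CK^2 / α^2)
            ≤ ∑ i, ⟪(s • A ω i : EuclideanSpace ℝ (Fin n)), u⟫ ^ 2 := hsumlb
          _ ≤ 4 * ((K+1)^2 * L * m) := h4
          _ = CK^2 * m := by rw [hCK2]; ring
      have hfc : (F.card : ℝ) ≤ α^2 * m := by
        have hpos : 0 < CK^2 / α^2 := by positivity
        rw [← mul_le_mul_iff_of_pos_right hpos]
        calc (F.card : ℝ) * (CK^2 / α^2) ≤ CK^2 * m := hmain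
          _ = α^2 * m * (CK^2 / α^2) := by field_simp
      calc (F.card : ℝ) ≤ α^2 * m := hfc
        _ ≤ α * m := by nlinarith [Nat.cast_nonneg (α := ℝ) m]
  -- measure bookkeeping
  have hGc : μ ((U ∩ badᶜ)ᶜ) ≤ ENNReal.ofReal (2 * Real.exp (-(m:ℝ))) := by
    have hcompl : (U ∩ badᶜ)ᶜ = Uᶜ ∪ bad := by
      rw [Set.compl_inter, compl_compl]
    rw [hcompl]
    calc μ (Uᶜ ∪ bad) ≤ μ Uᶜ + μ bad := measure_union_le _ _
      _ = μ bad := by rw [hUc, zero_add]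
      _ ≤ ENNReal.ofReal (Real.exp (-(2:ℝ) * m)) := hbad
      _ ≤ ENNReal.ofReal (2 * Real.exp (-(m:ℝ))) := by
          apply ENNReal.ofReal_le_ofReal
          have h1 : Real.exp (-(2:ℝ) * m) ≤ Real.exp (-(m:ℝ)) := by
            apply Real.exp_le_exp.2
            have : (0:ℝ) ≤ m := Nat.cast_nonneg m
            linarith
          linarith [Real.exp_pos (-(m:ℝ))]
  have hμG : ENNReal.ofReal (1 - 2 * Real.exp (-(m:ℝ))) ≤ μ (U ∩ badᶜ) := by
    have hGmeas : MeasurableSet (U ∩ badᶜ) := hUmeas.inter hbadmeas.compl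
    have hcc : μ (U ∩ badᶜ) = 1 - μ ((U ∩ badᶜ)ᶜ) := by
      conv_lhs => rw [← compl_compl (U ∩ badᶜ)]
      exact prob_compl_eq_one_sub hGmeas.compl
    rw [hcc]
    calc ENNReal.ofReal (1 - 2 * Real.exp (-(m:ℝ)))
        = 1 - ENNReal.ofReal (2 * Real.exp (-(m:ℝ))) := by
          rw [ENNReal.ofReal_sub _ (by positivity), ENNReal.ofReal_one]
      _ ≤ 1 - μ ((U ∩ badᶜ)ᶜ) := tsub_le_tsub_left hGc 1
  exact hμG.trans (measure_mono hGsub)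
end
end

section
/- Let α ∈ (0,1] and β ∈ [0,1), let A ∈ ℝ^{m×n} with m ≥ n be a random matrix satisfying Assumption 1 (with parameter K), and let b = b̃ + b_C where A x* = b̃ and |supp(b_C)| = βm. Then there exists a constant C_K > 0 depending only on K such that with probability at least 1 − 2·exp(−m), simultaneously for every x ∈ ℝⁿ, the bound |⟨a_i, x⟩ − b_i| ≤ (C_K/(α√n))·‖x − x*‖ holds for all but at most (α + β)m indices i ∈ [m]. -/
open MeasureTheory ProbabilityTheory Finset
open scoped RealInnerProductSpace ENNReal NNReal BigOperators

noncomputable section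

section Aux

open Metric


lemma sep_card_bound {n : ℕ} (hn : 0 < n) (X : Finset (EuclideanSpace ℝ (Fin n)))
    (hX1 : ∀ x ∈ X, ‖x‖ = 1)
    (hX2 : (X : Set (EuclideanSpace ℝ (Fin n))).Pairwise fun x y => (1:ℝ)/2 ≤ dist x y) :
    (X.card : ℝ) ≤ 6 ^ n := by
  haveI : Nontrivial (EuclideanSpace ℝ (Fin n)) :=
    Module.nontrivial_of_finrank_pos (R := ℝ) (by simpa using hn)
  set V1 : ℝ≥0∞ := volume (ball (0 : EuclideanSpace ℝ (Fin n)) 1) with hV1def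
  have hV10 : V1 ≠ 0 := (measure_ball_pos _ _ one_pos).ne'
  have hV1t : V1 ≠ ⊤ := measure_ball_lt_top.ne
  have hdisj : (X : Set (EuclideanSpace ℝ (Fin n))).PairwiseDisjoint
      fun x => ball x (1/4 : ℝ) := by
    intro x hx y hy hxy
    exact ball_disjoint_ball (by linarith [hX2 hx hy hxy])
  have hunion : (⋃ x ∈ X, ball x (1/4 : ℝ)) ⊆ ball (0 : EuclideanSpace ℝ (Fin n)) (3/2) := by
    intro y hy
    simp only [Set.mem_iUnion] at hy
    obtain ⟨x, hx, hyx⟩ := hy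
    have hx1 := hX1 x hx
    rw [mem_ball] at hyx ⊢
    calc dist y 0 ≤ dist y x + dist x 0 := dist_triangle _ _ _
      _ < 3/2 := by rw [dist_zero_right, hx1]; linarith
  have hfr : Module.finrank ℝ (EuclideanSpace ℝ (Fin n)) = n := finrank_euclideanSpace_fin
  have hball : ∀ x : EuclideanSpace ℝ (Fin n), volume (ball x (1/4 : ℝ))
      = ENNReal.ofReal ((1/4 : ℝ) ^ n) * V1 := by
    intro x
    rw [hV1def, Measure.addHaar_ball volume x (by norm_num : (0:ℝ) ≤ 1/4), hfr]
  have hmeas : volume (⋃ x ∈ X, ball x (1/4 : ℝ)) = ∑ x ∈ X, volume (ball x (1/4:ℝ)) :=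
    measure_biUnion_finset hdisj fun _ _ => measurableSet_ball
  have key : (X.card : ℝ≥0∞) * (ENNReal.ofReal ((1/4:ℝ)^n) * V1)
      ≤ ENNReal.ofReal ((3/2:ℝ)^n) * V1 := by
    calc (X.card : ℝ≥0∞) * (ENNReal.ofReal ((1/4:ℝ)^n) * V1)
        = ∑ _x ∈ X, (ENNReal.ofReal ((1/4:ℝ)^n) * V1) := by
          rw [Finset.sum_const, nsmul_eq_mul]
      _ = ∑ x ∈ X, volume (ball x (1/4:ℝ)) := by
          exact Finset.sum_congr rfl fun x _ => (hball x).symm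
      _ = volume (⋃ x ∈ X, ball x (1/4 : ℝ)) := hmeas.symm
      _ ≤ volume (ball (0 : EuclideanSpace ℝ (Fin n)) (3/2)) := measure_mono hunion
      _ = ENNReal.ofReal ((3/2:ℝ)^n) * V1 := by
          rw [hV1def, Measure.addHaar_ball volume _ (by norm_num : (0:ℝ) ≤ 3/2), hfr]
  rw [← mul_assoc] at key
  have key2 : (X.card : ℝ≥0∞) * ENNReal.ofReal ((1/4:ℝ)^n)
      ≤ ENNReal.ofReal ((3/2:ℝ)^n) := (ENNReal.mul_le_mul_iff_left hV10 hV1t).mp key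
  have key3 : (X.card : ℝ) * (1/4:ℝ)^n ≤ (3/2:ℝ)^n := by
    have h := ENNReal.toReal_mono (by simp) key2
    rw [ENNReal.toReal_mul, ENNReal.toReal_ofReal (by positivity),
      ENNReal.toReal_ofReal (by positivity)] at h
    simpa using h
  calc (X.card : ℝ) = (X.card : ℝ) * (1/4:ℝ)^n * 4^n := by
        rw [mul_assoc, ← mul_pow]; norm_num
    _ ≤ (3/2:ℝ)^n * 4^n := mul_le_mul_of_nonneg_right key3 (by positivity)
    _ = 6^n := by rw [← mul_pow]; norm_num

lemma net_exists {n : ℕ} (hn : 0 < n) :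
    ∃ N : Finset (EuclideanSpace ℝ (Fin n)), (N.card : ℝ) ≤ 6 ^ n ∧
      (∀ v ∈ N, ‖v‖ = 1) ∧
      ∀ u : EuclideanSpace ℝ (Fin n), ‖u‖ = 1 → ∃ v ∈ N, ‖u - v‖ ≤ 1/2 := by
  classical
  set P : Finset (EuclideanSpace ℝ (Fin n)) → Prop := fun X => (∀ x ∈ X, ‖x‖ = 1) ∧
    (X : Set (EuclideanSpace ℝ (Fin n))).Pairwise fun x y => (1:ℝ)/2 ≤ dist x y with hP
  set C : Set ℕ := {k | ∃ X, P X ∧ X.card = k} with hC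
  have hC0 : 0 ∈ C := ⟨∅, ⟨fun x hx => absurd hx (Finset.notMem_empty x), by simp⟩, rfl⟩
  have hCbdd : BddAbove C := by
    refine ⟨6^n, fun k hk => ?_⟩
    obtain ⟨X, hX, rfl⟩ := hk
    have h := sep_card_bound hn X hX.1 hX.2
    have h2 : (X.card : ℝ) ≤ ((6^n : ℕ) : ℝ) := by push_cast; exact h
    exact_mod_cast h2
  obtain ⟨N, hN, hNcard⟩ := Nat.sSup_mem ⟨0, hC0⟩ hCbdd
  refine ⟨N, sep_card_bound hn N hN.1 hN.2, hN.1, ?_⟩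
  intro u hu
  by_contra hcon
  push_neg at hcon
  have huN : u ∉ N := fun h => by
    have := hcon u h
    simp only [sub_self, norm_zero] at this
    norm_num at this
  have hP' : P (insert u N) := by
    constructor
    · intro x hx
      rcases Finset.mem_insert.mp hx with rfl | hx
      · exact hu
      · exact hN.1 x hx
    · rw [Finset.coe_insert]
      intro x hx y hy hxy
      rcases Set.mem_insert_iff.mp hx with hx' | hx' <;>
        rcases Set.mem_insert_iff.mp hy with hy' | hy'
      · exact absurd (hx'.trans hy'.symm) hxy
      · subst hx'; rw [dist_eq_norm]; exact le_of_lt (hcon y hy')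
      · subst hy'; rw [dist_comm, dist_eq_norm]; exact le_of_lt (hcon x hx')
      · exact hN.2 hx' hy' hxy
  have hmem : (insert u N).card ∈ C := ⟨_, hP', rfl⟩
  have hle := le_csSup hCbdd hmem
  rw [Finset.card_insert_of_notMem huN, hNcard] at hle
  omega

lemma subg_exp_bound {Ω : Type*} [MeasurableSpace Ω] (μ : Measure Ω) [IsProbabilityMeasure μ]
    {Y : Ω → ℝ} (hmeas : Measurable Y) {B K : ℝ} (hB : 0 < B) (hK : 0 < K)
    (hbd : ∀ᵐ ω ∂μ, |Y ω| ≤ B) (hs : subgNorm μ Y ≤ K) :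
    ∫ ω, Real.exp (Y ω ^ 2 / (2*K) ^ 2) ∂μ ≤ 2 := by
  set S := {t : ℝ | 0 < t ∧ ∫ ω, Real.exp (Y ω ^ 2 / t ^ 2) ∂μ ≤ 2} with hSdef
  have hint : ∀ t : ℝ, 0 < t → Integrable (fun ω => Real.exp (Y ω ^ 2 / t ^ 2)) μ := by
    intro t ht
    refine Integrable.mono' (integrable_const (Real.exp (B^2 / t^2)))
      ((hmeas.pow_const 2).div_const _).exp.aestronglyMeasurable ?_
    filter_upwards [hbd] with ω hω
    rw [Real.norm_eq_abs, abs_of_pos (Real.exp_pos _)]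
    apply Real.exp_le_exp.mpr
    apply div_le_div_of_nonneg_right _ (by positivity)
    calc Y ω ^ 2 = |Y ω| ^ 2 := (sq_abs _).symm
      _ ≤ B ^ 2 := by apply pow_le_pow_left₀ (abs_nonneg _) hω
  have hmono : ∀ t t' : ℝ, 0 < t' → t' ≤ t →
      ∫ ω, Real.exp (Y ω ^ 2 / t ^ 2) ∂μ ≤ ∫ ω, Real.exp (Y ω ^ 2 / t' ^ 2) ∂μ := by
    intro t t' ht' htt'
    apply integral_mono (hint t (lt_of_lt_of_le ht' htt')) (hint t' ht')
    intro ω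
    apply Real.exp_le_exp.mpr
    apply div_le_div_of_nonneg_left (sq_nonneg _) (by positivity)
    apply pow_le_pow_left₀ ht'.le htt'
  have ht1 : (B / Real.sqrt (Real.log 2)) ∈ S := by
    have hlog : 0 < Real.log 2 := Real.log_pos (by norm_num)
    have ht1pos : 0 < B / Real.sqrt (Real.log 2) := by positivity
    refine ⟨ht1pos, ?_⟩
    have heq : (B / Real.sqrt (Real.log 2))^2 = B^2 / Real.log 2 := by
      rw [div_pow, Real.sq_sqrt hlog.le]
    calc ∫ ω, Real.exp (Y ω ^ 2 / (B / Real.sqrt (Real.log 2)) ^ 2) ∂μ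
        ≤ ∫ _ω, (2:ℝ) ∂μ := by
          apply integral_mono_ae (hint _ ht1pos) (integrable_const _)
          filter_upwards [hbd] with ω hω
          rw [heq]
          have h1 : Y ω ^ 2 / (B^2 / Real.log 2) ≤ Real.log 2 := by
            rw [div_div_eq_mul_div, div_le_iff₀ (by positivity)]
            calc Y ω ^ 2 * Real.log 2 ≤ B ^ 2 * Real.log 2 := by
                  apply mul_le_mul_of_nonneg_right _ hlog.le
                  calc Y ω ^ 2 = |Y ω| ^ 2 := (sq_abs _).symm
                    _ ≤ B ^ 2 := by apply pow_le_pow_left₀ (abs_nonneg _) hω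
              _ = Real.log 2 * B ^ 2 := by ring
          calc Real.exp (Y ω ^ 2 / (B^2 / Real.log 2)) ≤ Real.exp (Real.log 2) :=
                Real.exp_le_exp.mpr h1
            _ = 2 := Real.exp_log (by norm_num)
      _ = 2 := by simp
  have hex : ∃ t0 ∈ S, t0 ≤ 2*K := by
    by_contra hcon
    push_neg at hcon
    have h1 : 2*K ≤ sInf S := le_csInf ⟨_, ht1⟩ fun t ht => (hcon t ht).le
    have h2 : sInf S ≤ K := hs
    linarith
  obtain ⟨t0, ht0S, ht0le⟩ := hex
  exact le_trans (hmono (2*K) t0 ht0S.1 ht0le) ht0S.2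

lemma chernoff_row {Ω : Type*} [MeasurableSpace Ω] (μ : Measure Ω) [IsProbabilityMeasure μ]
    {m n : ℕ} {A : Ω → Fin m → EuclideanSpace ℝ (Fin n)} {K : ℝ} (hK : 0 < K)
    (hA : Assumption1 μ A K) (hn : 0 < n) (v : EuclideanSpace ℝ (Fin n)) (hv : ‖v‖ = 1)
    (s : ℝ) :
    μ {ω | s ≤ ∑ i, (Real.sqrt n * ⟪A ω i, v⟫) ^ 2}
      ≤ ENNReal.ofReal (Real.exp (-(s / (4 * K ^ 2))) * 2 ^ m) := by
  classical
  set t : ℝ := 1 / (4 * K ^ 2) with htdef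
  have ht : 0 < t := by positivity
  set Z : Fin m → Ω → ℝ := fun i ω => (Real.sqrt n * ⟪A ω i, v⟫) ^ 2 with hZdef
  have hinner_meas : ∀ i, Measurable fun ω => ⟪A ω i, v⟫ := by
    intro i
    exact (Continuous.measurable (continuous_id.inner continuous_const)).comp
      (hA.measurableRows i)
  have hZmeas : ∀ i, Measurable (Z i) := fun i =>
    ((hinner_meas i).const_mul _).pow_const 2
  have hZbd : ∀ i, ∀ᵐ ω ∂μ, |Real.sqrt n * ⟪A ω i, v⟫| ≤ Real.sqrt n := by
    intro i
    filter_upwards [hA.unitNorm] with ω hω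
    rw [abs_mul, abs_of_nonneg (Real.sqrt_nonneg _)]
    have h1 : |⟪A ω i, v⟫| ≤ 1 := by
      calc |⟪A ω i, v⟫| ≤ ‖A ω i‖ * ‖v‖ := abs_real_inner_le_norm _ _
        _ = 1 := by rw [hω i, hv, one_mul]
    calc Real.sqrt n * |⟪A ω i, v⟫| ≤ Real.sqrt n * 1 :=
          mul_le_mul_of_nonneg_left h1 (Real.sqrt_nonneg _)
      _ = Real.sqrt n := mul_one _
  have hmgf : ∀ i, mgf (Z i) μ t ≤ 2 := by
    intro i
    have hsg := hA.subgaussian i v hv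
    have heq : (fun ω => ⟪Real.sqrt n • A ω i, v⟫) = fun ω => Real.sqrt n * ⟪A ω i, v⟫ := by
      funext ω; rw [real_inner_smul_left]
    rw [heq] at hsg
    have hB : (0:ℝ) < Real.sqrt n := Real.sqrt_pos.mpr (by exact_mod_cast hn)
    have := subg_exp_bound μ (Y := fun ω => Real.sqrt n * ⟪A ω i, v⟫)
      ((hinner_meas i).const_mul _) hB hK (hZbd i) hsg
    rw [mgf]
    calc ∫ ω, Real.exp (t * Z i ω) ∂μ
        = ∫ ω, Real.exp ((Real.sqrt n * ⟪A ω i, v⟫) ^ 2 / (2*K) ^ 2) ∂μ := by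
          congr 1; funext ω
          congr 1
          have h4 : ((2:ℝ)*K)^2 = 4*K^2 := by ring
          rw [h4, htdef, one_div, inv_mul_eq_div]
      _ ≤ 2 := this
  have hZint : ∀ i, Integrable (fun ω => Real.exp (t * Z i ω)) μ := by
    intro i
    refine Integrable.mono' (integrable_const (Real.exp (t * n)))
      (((hZmeas i).const_mul t).exp).aestronglyMeasurable ?_
    filter_upwards [hZbd i] with ω hω
    rw [Real.norm_eq_abs, abs_of_pos (Real.exp_pos _)]
    apply Real.exp_le_exp.mpr
    apply mul_le_mul_of_nonneg_left _ ht.le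
    rw [hZdef]
    calc (Real.sqrt n * ⟪A ω i, v⟫) ^ 2 = |Real.sqrt n * ⟪A ω i, v⟫| ^ 2 := (sq_abs _).symm
      _ ≤ Real.sqrt n ^ 2 := pow_le_pow_left₀ (abs_nonneg _) hω 2
      _ = n := Real.sq_sqrt (Nat.cast_nonneg n)
  have hindep : iIndepFun Z μ := by
    have := hA.indepRows.comp (fun _ w => (Real.sqrt n * ⟪w, v⟫) ^ 2)
      (fun _ => ((Continuous.measurable (continuous_id.inner continuous_const)).const_mul
        _).pow_const 2)
    exact this
  have hsum_int : Integrable (fun ω => Real.exp (t * (∑ i, Z i) ω)) μ :=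
    hindep.integrable_exp_mul_sum hZmeas fun i _ => hZint i
  have hchern := measure_ge_le_exp_mul_mgf (X := ∑ i, Z i) (μ := μ) (t := t) s ht.le hsum_int
  have hmgfsum : mgf (∑ i, Z i) μ t ≤ 2 ^ m := by
    rw [hindep.mgf_sum hZmeas]
    calc ∏ i, mgf (Z i) μ t ≤ ∏ _i : Fin m, (2:ℝ) :=
          Finset.prod_le_prod (fun i _ => mgf_nonneg) (fun i _ => hmgf i)
      _ = 2 ^ m := by simp
  have hset : {ω | s ≤ ∑ i, (Real.sqrt n * ⟪A ω i, v⟫) ^ 2} = {ω | s ≤ (∑ i, Z i) ω} := by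
    ext ω; simp [hZdef]
  rw [hset]
  have hfinal : (μ {ω | s ≤ (∑ i, Z i) ω}).toReal
      ≤ Real.exp (-(s / (4 * K ^ 2))) * 2 ^ m := by
    calc (μ {ω | s ≤ (∑ i, Z i) ω}).toReal ≤ Real.exp (-t * s) * mgf (∑ i, Z i) μ t := hchern
      _ ≤ Real.exp (-t * s) * 2 ^ m :=
          mul_le_mul_of_nonneg_left hmgfsum (Real.exp_pos _).le
      _ = Real.exp (-(s / (4 * K ^ 2))) * 2 ^ m := by
          congr 2
          rw [htdef]; field_simp
  calc μ {ω | s ≤ (∑ i, Z i) ω}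
      = ENNReal.ofReal ((μ {ω | s ≤ (∑ i, Z i) ω}).toReal) :=
        (ENNReal.ofReal_toReal (measure_ne_top μ _)).symm
    _ ≤ ENNReal.ofReal (Real.exp (-(s / (4 * K ^ 2))) * 2 ^ m) :=
        ENNReal.ofReal_le_ofReal hfinal

lemma net_to_all {n m : ℕ} (hn : 0 < n) (a : Fin m → EuclideanSpace ℝ (Fin n))
    (N : Finset (EuclideanSpace ℝ (Fin n)))
    (hN : ∀ u : EuclideanSpace ℝ (Fin n), ‖u‖ = 1 → ∃ v ∈ N, ‖u - v‖ ≤ 1/2)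
    {D : ℝ} (hD : 0 ≤ D) (h : ∀ v ∈ N, ∑ i, ⟪a i, v⟫ ^ 2 ≤ D) :
    ∀ u : EuclideanSpace ℝ (Fin n), ∑ i, ⟪a i, u⟫ ^ 2 ≤ 4 * D * ‖u‖ ^ 2 := by
  haveI : Nontrivial (EuclideanSpace ℝ (Fin n)) :=
    Module.nontrivial_of_finrank_pos (R := ℝ) (by simpa using hn)
  set L : EuclideanSpace ℝ (Fin n) →ₗ[ℝ] EuclideanSpace ℝ (Fin m) :=
    { toFun := fun u => WithLp.toLp 2 (fun i => ⟪a i, u⟫)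
      map_add' := by
        intro x y; ext i
        show ⟪a i, x + y⟫ = ⟪a i, x⟫ + ⟪a i, y⟫
        exact inner_add_right _ _ _
      map_smul' := by
        intro c x; ext i
        show ⟪a i, c • x⟫ = c * ⟪a i, x⟫
        exact real_inner_smul_right _ _ _ } with hLdef
  have hL2 : ∀ u, ‖L u‖ ^ 2 = ∑ i, ⟪a i, u⟫ ^ 2 := by
    intro u
    rw [EuclideanSpace.norm_eq, Real.sq_sqrt (by positivity)]
    congr 1; funext i
    rw [Real.norm_eq_abs, sq_abs]
    rfl
  have hcont : Continuous L := L.continuous_of_finiteDimensional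
  have hsne : (sphere (0 : EuclideanSpace ℝ (Fin n)) 1).Nonempty :=
    NormedSpace.sphere_nonempty.mpr zero_le_one
  obtain ⟨u0, hu0s, hmax'⟩ := (isCompact_sphere (0 : EuclideanSpace ℝ (Fin n)) 1).exists_isMaxOn
    hsne (hcont.norm.continuousOn)
  have hmax : ∀ y ∈ sphere (0 : EuclideanSpace ℝ (Fin n)) 1, ‖L y‖ ≤ ‖L u0‖ :=
    fun y hy => hmax' hy
  set M : ℝ := ‖L u0‖ with hMdef
  have hu0 : ‖u0‖ = 1 := by rwa [mem_sphere_zero_iff_norm] at hu0s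
  have hMub : ∀ w : EuclideanSpace ℝ (Fin n), ‖L w‖ ≤ ‖w‖ * M := by
    intro w
    rcases eq_or_ne w 0 with rfl | hw
    · simp [map_zero]
    · have hwn : (0:ℝ) < ‖w‖ := norm_pos_iff.mpr hw
      have hunit : ‖(‖w‖⁻¹ • w)‖ = 1 := by
        rw [norm_smul, norm_inv, norm_norm, inv_mul_cancel₀ hwn.ne']
      have := hmax (‖w‖⁻¹ • w) (mem_sphere_zero_iff_norm.mpr hunit)
      have heq : L w = ‖w‖ • L (‖w‖⁻¹ • w) := by
        rw [_root_.map_smul, smul_smul, mul_inv_cancel₀ hwn.ne', one_smul]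
      rw [heq, norm_smul, norm_norm]
      exact mul_le_mul_of_nonneg_left this hwn.le
  have hMle : M ≤ 2 * Real.sqrt D := by
    obtain ⟨v, hvN, hv⟩ := hN u0 hu0
    have hLv : ‖L v‖ ≤ Real.sqrt D := by
      rw [show Real.sqrt D = Real.sqrt D from rfl]
      have h1 : ‖L v‖ ^ 2 ≤ D := by rw [hL2]; exact h v hvN
      have := Real.sqrt_le_sqrt h1
      rwa [Real.sqrt_sq (norm_nonneg _)] at this
    have htri : M ≤ ‖L v‖ + ‖L (u0 - v)‖ := by
      calc M = ‖L v + L (u0 - v)‖ := by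
              have hvv : v + (u0 - v) = u0 := by abel
              rw [← _root_.map_add, hvv]
        _ ≤ ‖L v‖ + ‖L (u0 - v)‖ := norm_add_le _ _
    have h2 : ‖L (u0 - v)‖ ≤ (1/2) * M := by
      calc ‖L (u0 - v)‖ ≤ ‖u0 - v‖ * M := hMub _
        _ ≤ (1/2) * M := by
            apply mul_le_mul_of_nonneg_right hv
            rw [hMdef]; exact norm_nonneg _
    linarith [htri, h2, hLv]
  intro u
  have h1 : ‖L u‖ ≤ ‖u‖ * (2 * Real.sqrt D) :=
    le_trans (hMub u) (mul_le_mul_of_nonneg_left hMle (norm_nonneg _))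
  have h2 : ‖L u‖ ^ 2 ≤ (‖u‖ * (2 * Real.sqrt D)) ^ 2 :=
    pow_le_pow_left₀ (norm_nonneg _) h1 2
  rw [hL2] at h2
  calc ∑ i, ⟪a i, u⟫ ^ 2 ≤ (‖u‖ * (2 * Real.sqrt D)) ^ 2 := h2
    _ = 4 * (Real.sqrt D ^ 2) * ‖u‖ ^ 2 := by ring
    _ = 4 * D * ‖u‖ ^ 2 := by rw [Real.sq_sqrt hD]

end Aux

set_option maxHeartbeats 1000000 in
/-- (Remark `corr_med_cor`). For the corrupted system `b = A x* + b_C` with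
`|supp(b_C)| = βm`, where `A` is a random matrix with `m ≥ n` satisfying Assumption 1 and
`α ∈ (0,1]`, with probability at least `1 - 2exp(-m)`, simultaneously for every `x ∈ ℝⁿ`
the bound `|⟨aᵢ,x⟩ - bᵢ| ≤ (C_K/(α√n))·‖x - x*‖` holds for all but at most `(α+β)m`
indices `i`. -/
theorem corr_med_cor :
    ∀ K : ℝ, 0 < K →
    ∃ CK : ℝ, 0 < CK ∧
    ∀ (α β : ℝ), 0 < α → α ≤ 1 → 0 ≤ β → β < 1 →
    ∀ (Ω : Type) (_ : MeasurableSpace Ω) (μ : Measure Ω), IsProbabilityMeasure μ →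
    ∀ (m n : ℕ), 0 < n → n ≤ m →
    ∀ A : Ω → Fin m → EuclideanSpace ℝ (Fin n), Assumption1 μ A K →
    ∀ (xstar : EuclideanSpace ℝ (Fin n)) (bC : Fin m → ℝ),
      ((Finset.univ.filter fun i => bC i ≠ 0).card : ℝ) = β * m →
    ENNReal.ofReal (1 - 2 * Real.exp (-(m : ℝ))) ≤
      μ {ω | ∀ x : EuclideanSpace ℝ (Fin n),
          ((Finset.univ.filter fun i =>
              ¬ |⟪A ω i, x⟫ - (⟪A ω i, xstar⟫ + bC i)| ≤
                CK / (α * Real.sqrt n) * ‖x - xstar‖).card : ℝ) ≤ (α + β) * m} := by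
  classical
  intro K hK
  refine ⟨9 * K, by positivity, ?_⟩
  intro α β hα hα1 hβ hβ1 Ω _inst μ hμ m n hn hnm A hA xstar bC hbC
  haveI := hμ
  have hnR : (0:ℝ) < n := by exact_mod_cast hn
  have hmR : (0:ℝ) < m := by exact_mod_cast lt_of_lt_of_le hn hnm
  obtain ⟨N, hNcard, hNunit, hNnet⟩ := net_exists hn
  set s : ℝ := 20 * K ^ 2 * m with hsdef
  set G : Set Ω := {ω | (∀ i, ‖A ω i‖ = 1) ∧
      ∀ v ∈ N, ∑ i, (Real.sqrt n * ⟪A ω i, v⟫) ^ 2 ≤ s} with hGdef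
  -- measurability of G
  have hinner_meas : ∀ (i : Fin m) (v : EuclideanSpace ℝ (Fin n)),
      Measurable fun ω => ⟪A ω i, v⟫ := fun i v =>
    (Continuous.measurable (continuous_id.inner continuous_const)).comp (hA.measurableRows i)
  have hG1meas : MeasurableSet {ω | ∀ i, ‖A ω i‖ = 1} := by
    rw [Set.setOf_forall]
    exact MeasurableSet.iInter fun i => (hA.measurableRows i).norm (measurableSet_singleton 1)
  have hG2meas : MeasurableSet {ω | ∀ v ∈ N, ∑ i, (Real.sqrt n * ⟪A ω i, v⟫) ^ 2 ≤ s} := by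
    have heq : {ω | ∀ v ∈ N, ∑ i, (Real.sqrt n * ⟪A ω i, v⟫) ^ 2 ≤ s}
        = ⋂ v ∈ N, {ω | ∑ i, (Real.sqrt n * ⟪A ω i, v⟫) ^ 2 ≤ s} := by
      ext ω; simp
    rw [heq]
    exact MeasurableSet.biInter N.countable_toSet fun v _ =>
      measurableSet_le (Finset.measurable_sum _ fun i _ =>
        ((hinner_meas i v).const_mul _).pow_const 2) measurable_const
  have hGmeas : MeasurableSet G := hG1meas.inter hG2meas
  -- probability bound
  have hGc : μ Gᶜ ≤ ENNReal.ofReal (2 * Real.exp (-(m : ℝ))) := by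
    have hsplit : Gᶜ ⊆ {ω | ∀ i, ‖A ω i‖ = 1}ᶜ ∪
        (⋃ v ∈ N, {ω | s ≤ ∑ i, (Real.sqrt n * ⟪A ω i, v⟫) ^ 2}) := by
      intro ω hω
      rw [hGdef, Set.mem_compl_iff, Set.mem_setOf_eq] at hω
      push_neg at hω
      by_cases h1 : ∀ i, ‖A ω i‖ = 1
      · obtain ⟨v, hv, hvs⟩ := hω h1
        right
        simp only [Set.mem_iUnion]
        exact ⟨v, hv, le_of_lt hvs⟩
      · exact Or.inl h1
    have h0 : μ {ω | ∀ i, ‖A ω i‖ = 1}ᶜ = 0 := by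
      have h := hA.unitNorm
      rw [MeasureTheory.ae_iff] at h
      have heq : {ω | ∀ i, ‖A ω i‖ = 1}ᶜ = {ω | ¬ ∀ i, ‖A ω i‖ = 1} := Set.compl_setOf _
      rw [heq]; exact h
    calc μ Gᶜ ≤ μ ({ω | ∀ i, ‖A ω i‖ = 1}ᶜ ∪
          (⋃ v ∈ N, {ω | s ≤ ∑ i, (Real.sqrt n * ⟪A ω i, v⟫) ^ 2})) := measure_mono hsplit
      _ ≤ μ {ω | ∀ i, ‖A ω i‖ = 1}ᶜ +
          μ (⋃ v ∈ N, {ω | s ≤ ∑ i, (Real.sqrt n * ⟪A ω i, v⟫) ^ 2}) := measure_union_le _ _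
      _ = μ (⋃ v ∈ N, {ω | s ≤ ∑ i, (Real.sqrt n * ⟪A ω i, v⟫) ^ 2}) := by rw [h0, zero_add]
      _ ≤ ∑ v ∈ N, μ {ω | s ≤ ∑ i, (Real.sqrt n * ⟪A ω i, v⟫) ^ 2} :=
          measure_biUnion_finset_le N _
      _ ≤ ∑ _v ∈ N, ENNReal.ofReal (Real.exp (-(s / (4 * K ^ 2))) * 2 ^ m) :=
          Finset.sum_le_sum fun v hv => chernoff_row μ hK hA hn v (hNunit v hv) s
      _ = (N.card : ℝ≥0∞) * ENNReal.ofReal (Real.exp (-(s / (4 * K ^ 2))) * 2 ^ m) := by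
          rw [Finset.sum_const, nsmul_eq_mul]
      _ ≤ ENNReal.ofReal (2 * Real.exp (-(m : ℝ))) := by
          rw [show ((N.card : ℝ≥0∞)) = ENNReal.ofReal (N.card : ℝ) by
            simp, ← ENNReal.ofReal_mul (by positivity)]
          apply ENNReal.ofReal_le_ofReal
          have hs4 : s / (4 * K ^ 2) = 5 * m := by
            rw [hsdef]; field_simp; ring
          rw [hs4]
          have h6 : (N.card : ℝ) ≤ 6 ^ m :=
            hNcard.trans (pow_le_pow_right₀ (by norm_num) hnm)
          have hexp1 : (2.7182818283 : ℝ) < Real.exp 1 := Real.exp_one_gt_d9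
          have h2e : (2 : ℝ) ≤ Real.exp 1 := by linarith
          have h12 : (12 : ℝ) ≤ Real.exp 4 := by
            have h4 : Real.exp 4 = Real.exp 1 ^ 4 := by
              rw [← Real.exp_nat_mul]; norm_num
            calc (12:ℝ) ≤ 2 ^ 4 := by norm_num
              _ ≤ Real.exp 1 ^ 4 := pow_le_pow_left₀ (by norm_num) h2e 4
              _ = Real.exp 4 := h4.symm
          have hkey : (6:ℝ) ^ m * 2 ^ m ≤ Real.exp (4 * m) := by
            have e1 : (6:ℝ) ^ m * 2 ^ m = 12 ^ m := by rw [← mul_pow]; norm_num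
            have e2 : Real.exp (4 * (m:ℝ)) = Real.exp 4 ^ m := by
              rw [mul_comm (4:ℝ) (m:ℝ), Real.exp_nat_mul]
            rw [e1, e2]
            exact pow_le_pow_left₀ (by norm_num) h12 m
          calc (N.card : ℝ) * (Real.exp (-(5 * m)) * 2 ^ m)
              ≤ 6 ^ m * (Real.exp (-(5 * m)) * 2 ^ m) := by
                apply mul_le_mul_of_nonneg_right h6 (by positivity)
            _ = (6 ^ m * 2 ^ m) * Real.exp (-(5 * m)) := by ring
            _ ≤ Real.exp (4 * m) * Real.exp (-(5 * m)) := by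
                apply mul_le_mul_of_nonneg_right hkey (Real.exp_pos _).le
            _ = Real.exp (-(m : ℝ)) := by rw [← Real.exp_add]; ring_nf
            _ ≤ 2 * Real.exp (-(m : ℝ)) := by nlinarith [Real.exp_pos (-(m:ℝ))]
  -- deterministic part
  have hGsub : G ⊆ {ω | ∀ x : EuclideanSpace ℝ (Fin n),
      ((Finset.univ.filter fun i =>
          ¬ |⟪A ω i, x⟫ - (⟪A ω i, xstar⟫ + bC i)| ≤
            9 * K / (α * Real.sqrt n) * ‖x - xstar‖).card : ℝ) ≤ (α + β) * m} := by
    rintro ω ⟨hω1, hω2⟩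
    have hop : ∀ u : EuclideanSpace ℝ (Fin n),
        ∑ i, ⟪A ω i, u⟫ ^ 2 ≤ 4 * (s / n) * ‖u‖ ^ 2 := by
      apply net_to_all hn (fun i => A ω i) N hNnet (by positivity)
      intro v hv
      have h1 := hω2 v hv
      have h2 : ∀ i : Fin m, (Real.sqrt n * ⟪A ω i, v⟫) ^ 2 = n * ⟪A ω i, v⟫ ^ 2 := by
        intro i; rw [mul_pow, Real.sq_sqrt (Nat.cast_nonneg n)]
      rw [Finset.sum_congr rfl fun i _ => h2 i, ← Finset.mul_sum] at h1
      rw [le_div_iff₀ hnR]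
      linarith
    intro x
    set u : EuclideanSpace ℝ (Fin n) := x - xstar with hudef
    set c : ℝ := 9 * K / (α * Real.sqrt n) with hcdef
    have hc : 0 < c := by
      have : (0:ℝ) < Real.sqrt n := Real.sqrt_pos.mpr hnR
      positivity
    have hrw : ∀ i, ⟪A ω i, x⟫ - (⟪A ω i, xstar⟫ + bC i) = ⟪A ω i, u⟫ - bC i := by
      intro i
      rw [hudef, inner_sub_right]
      ring
    have hsubset : (Finset.univ.filter fun i =>
        ¬ |⟪A ω i, x⟫ - (⟪A ω i, xstar⟫ + bC i)| ≤ c * ‖x - xstar‖) ⊆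
        (Finset.univ.filter fun i => bC i ≠ 0) ∪
        (Finset.univ.filter fun i => ¬ |⟪A ω i, u⟫| ≤ c * ‖u‖) := by
      intro i hi
      rw [Finset.mem_filter] at hi
      rw [Finset.mem_union, Finset.mem_filter, Finset.mem_filter]
      by_contra hcon
      push_neg at hcon
      obtain ⟨hb0, hble⟩ := hcon
      apply hi.2
      rw [hrw i, hb0 (Finset.mem_univ i), sub_zero]
      exact hble (Finset.mem_univ i)
    have hS2 : ((Finset.univ.filter fun i => ¬ |⟪A ω i, u⟫| ≤ c * ‖u‖).card : ℝ) ≤ α * m := by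
      rcases eq_or_ne ‖u‖ 0 with hu0 | hu0
      · have hu0' : u = 0 := norm_eq_zero.mp hu0
        have : (Finset.univ.filter fun i => ¬ |⟪A ω i, u⟫| ≤ c * ‖u‖) = ∅ := by
          apply Finset.filter_false_of_mem
          intro i _
          rw [not_not, hu0']
          simp [inner_zero_right]
        rw [this]
        simp only [Finset.card_empty, Nat.cast_zero]
        positivity
      · have hupos : (0:ℝ) < ‖u‖ := (norm_nonneg u).lt_of_ne' hu0
        set S2 := Finset.univ.filter fun i => ¬ |⟪A ω i, u⟫| ≤ c * ‖u‖ with hS2def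
        have hkey : ∀ i ∈ S2, (c * ‖u‖) ^ 2 ≤ ⟪A ω i, u⟫ ^ 2 := by
          intro i hi
          rw [hS2def, Finset.mem_filter] at hi
          have := lt_of_not_ge hi.2
          calc (c * ‖u‖) ^ 2 ≤ |⟪A ω i, u⟫| ^ 2 :=
                pow_le_pow_left₀ (by positivity) this.le 2
            _ = ⟪A ω i, u⟫ ^ 2 := sq_abs _
        have hsum : (S2.card : ℝ) * (c * ‖u‖) ^ 2 ≤ 4 * (s / n) * ‖u‖ ^ 2 := by
          have h1 : S2.card • ((c * ‖u‖) ^ 2) ≤ ∑ i ∈ S2, ⟪A ω i, u⟫ ^ 2 :=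
            Finset.card_nsmul_le_sum S2 _ _ hkey
          rw [nsmul_eq_mul] at h1
          refine h1.trans (le_trans (Finset.sum_le_sum_of_subset_of_nonneg
            (Finset.subset_univ S2) fun i _ _ => sq_nonneg _) (hop u))
        have hsqrtn : Real.sqrt n ^ 2 = n := Real.sq_sqrt (Nat.cast_nonneg n)
        have hden : α * Real.sqrt n ≠ 0 := by positivity
        have hc1 : c * (α * Real.sqrt n) = 9 * K := by
          rw [hcdef, div_mul_cancel₀ _ hden]
        have hc2 : c ^ 2 * (α ^ 2 * n) = 81 * K ^ 2 := by
          have h := congrArg (fun z : ℝ => z ^ 2) hc1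
          simp only [mul_pow] at h
          rw [hsqrtn] at h
          linear_combination h
        have hstep : (S2.card : ℝ) * c ^ 2 ≤ 4 * (s / n) := by
          have h2 : (S2.card : ℝ) * c ^ 2 * ‖u‖ ^ 2 ≤ 4 * (s / n) * ‖u‖ ^ 2 := by
            calc (S2.card : ℝ) * c ^ 2 * ‖u‖ ^ 2 = (S2.card : ℝ) * (c * ‖u‖) ^ 2 := by ring
              _ ≤ 4 * (s / n) * ‖u‖ ^ 2 := hsum
          exact le_of_mul_le_mul_right h2 (by positivity)
        have hstep2 : (S2.card : ℝ) * (81 * K ^ 2) ≤ 80 * K ^ 2 * m * α ^ 2 := by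
          have h3 : (S2.card : ℝ) * c ^ 2 * (α ^ 2 * n) ≤ 4 * (s / n) * (α ^ 2 * n) := by
            apply mul_le_mul_of_nonneg_right hstep (by positivity)
          rw [mul_assoc, hc2] at h3
          calc (S2.card : ℝ) * (81 * K ^ 2) ≤ 4 * (s / n) * (α ^ 2 * n) := h3
            _ = 80 * K ^ 2 * m * α ^ 2 := by
                rw [hsdef]; field_simp; ring
        have hK2 : (0:ℝ) < K ^ 2 := by positivity
        have h81 : (S2.card : ℝ) * 81 ≤ 80 * ((m:ℝ) * α ^ 2) := by nlinarith [hstep2, hK2]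
        have hα2 : α ^ 2 ≤ α := by nlinarith
        have hm2 : (m:ℝ) * α ^ 2 ≤ (m:ℝ) * α := mul_le_mul_of_nonneg_left hα2 hmR.le
        have hma : (0:ℝ) ≤ (m:ℝ) * α := by positivity
        linarith
    calc ((Finset.univ.filter fun i =>
          ¬ |⟪A ω i, x⟫ - (⟪A ω i, xstar⟫ + bC i)| ≤ c * ‖x - xstar‖).card : ℝ)
        ≤ (((Finset.univ.filter fun i => bC i ≠ 0) ∪
            (Finset.univ.filter fun i => ¬ |⟪A ω i, u⟫| ≤ c * ‖u‖)).card : ℝ) := by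
          exact_mod_cast Finset.card_le_card hsubset
      _ ≤ ((Finset.univ.filter fun i => bC i ≠ 0).card : ℝ) +
          ((Finset.univ.filter fun i => ¬ |⟪A ω i, u⟫| ≤ c * ‖u‖).card : ℝ) := by
          exact_mod_cast Finset.card_union_le _ _
      _ ≤ β * m + α * m := by rw [hbC]; linarith [hS2]
      _ = (α + β) * m := by ring
  -- conclude
  calc ENNReal.ofReal (1 - 2 * Real.exp (-(m : ℝ)))
      = 1 - ENNReal.ofReal (2 * Real.exp (-(m : ℝ))) := by
        rw [ENNReal.ofReal_sub _ (by positivity), ENNReal.ofReal_one]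
    _ ≤ 1 - μ Gᶜ := tsub_le_tsub_left hGc 1
    _ = μ G := by
        have h1 : μ G + μ Gᶜ = 1 := (measure_add_measure_compl hGmeas).trans measure_univ
        rw [ENNReal.eq_sub_of_add_eq (measure_ne_top μ _) h1]
    _ ≤ _ := measure_mono hGsub
end
end

section
/- Let a_1, …, a_m ∈ ℝⁿ be unit vectors, b ∈ ℝ^m, x_k, x* ∈ ℝⁿ, and η ∈ ℝ. Let i be sampled uniformly from [m], let s_i(x_k) = sgn(⟨a_i, x_k⟩ − b_i), and set x_{k+1} = x_k − η·s_i(x_k)·a_i. Then E‖x_{k+1} − x*‖² = (η − η*(x_k))² − (η*(x_k))² + ‖x_k − x*‖², where η*(x_k) = (1/m)·Σ_{i=1}^m s_i(x_k)·⟨x_k − x*, a_i⟩. In particular, the expected squared error E‖x_{k+1} − x*‖² is minimized, over all step sizes η, at η = η*(x_k). -/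
open MeasureTheory ProbabilityTheory Finset
open scoped RealInnerProductSpace ENNReal NNReal BigOperators

noncomputable section

/-- one-step expected error identity for ℓ₁-SGD (derivation of OptSGD).
With `i` uniform on `[m]` and `x_{k+1} = x_k - η·sgn(⟨aᵢ,x_k⟩ - bᵢ)·aᵢ`, one has
`E‖x_{k+1} - x*‖² = (η - η*(x_k))² - η*(x_k)² + ‖x_k - x*‖²`; in particular the expected
squared error is minimized over `η` at `η = η*(x_k)`. -/
lemma sgn_sq (t : ℝ) : sgn t ^ 2 = 1 := by
  unfold sgn; split <;> norm_num

lemma key_identity {m n : ℕ} (hm : 0 < m)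
    (a : Fin m → EuclideanSpace ℝ (Fin n)) (ha : ∀ i, ‖a i‖ = 1)
    (b : Fin m → ℝ) (xk xstar : EuclideanSpace ℝ (Fin n)) (η : ℝ) :
    ((1 : ℝ) / m) * ∑ i, ‖(xk - (η * sgn (⟪a i, xk⟫ - b i)) • a i) - xstar‖ ^ 2 =
        (η - etaStar a b xstar xk) ^ 2 - etaStar a b xstar xk ^ 2 + ‖xk - xstar‖ ^ 2 := by
  have hterm : ∀ i, ‖(xk - (η * sgn (⟪a i, xk⟫ - b i)) • a i) - xstar‖ ^ 2
      = ‖xk - xstar‖ ^ 2 - 2 * η * (sgn (⟪a i, xk⟫ - b i) * ⟪xk - xstar, a i⟫) + η ^ 2 := by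
    intro i
    set c : ℝ := η * sgn (⟪a i, xk⟫ - b i) with hc
    have h1 : (xk - c • a i) - xstar = (xk - xstar) - c • a i := by abel
    rw [h1, norm_sub_sq_real, real_inner_smul_right, norm_smul, mul_pow, ha i]
    have hs : sgn (⟪a i, xk⟫ - b i) ^ 2 = 1 := sgn_sq _
    have : ‖c‖ ^ 2 = η ^ 2 := by
      rw [hc, Real.norm_eq_abs, sq_abs, mul_pow, hs, mul_one]
    rw [this]
    ring
  rw [Finset.sum_congr rfl (fun i _ => hterm i)]
  rw [Finset.sum_add_distrib, Finset.sum_sub_distrib, Finset.sum_const, Finset.sum_const]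
  have hcard : (Finset.univ : Finset (Fin m)).card = m := Finset.card_fin m
  have hm' : (m : ℝ) ≠ 0 := Nat.cast_ne_zero.mpr hm.ne'
  have hmul : ∑ i, 2 * η * (sgn (⟪a i, xk⟫ - b i) * ⟪xk - xstar, a i⟫)
      = 2 * η * ∑ i, sgn (⟪a i, xk⟫ - b i) * ⟪xk - xstar, a i⟫ := by
    rw [Finset.mul_sum]
  rw [hmul, hcard]
  have heta : etaStar a b xstar xk
      = (1 / m) * ∑ i, sgn (⟪a i, xk⟫ - b i) * ⟪xk - xstar, a i⟫ := rfl
  field_simp [heta]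
  rw [heta]
  field_simp
  ring

/-- s -/
theorem optSGD_step_identity {m n : ℕ} (hm : 0 < m)
    (a : Fin m → EuclideanSpace ℝ (Fin n)) (ha : ∀ i, ‖a i‖ = 1)
    (b : Fin m → ℝ) (xk xstar : EuclideanSpace ℝ (Fin n)) (η : ℝ) :
    ((1 : ℝ) / m) * ∑ i, ‖(xk - (η * sgn (⟪a i, xk⟫ - b i)) • a i) - xstar‖ ^ 2 =
        (η - etaStar a b xstar xk) ^ 2 - etaStar a b xstar xk ^ 2 + ‖xk - xstar‖ ^ 2 ∧
      ∀ η' : ℝ,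
        ((1 : ℝ) / m) *
            ∑ i, ‖(xk - (etaStar a b xstar xk * sgn (⟪a i, xk⟫ - b i)) • a i) - xstar‖ ^ 2 ≤
          ((1 : ℝ) / m) * ∑ i, ‖(xk - (η' * sgn (⟪a i, xk⟫ - b i)) • a i) - xstar‖ ^ 2 := by
  have h1 := key_identity hm a ha b xk xstar η
  refine ⟨h1, fun η' => ?_⟩
  rw [key_identity hm a ha b xk xstar η', key_identity hm a ha b xk xstar (etaStar a b xstar xk)]
  nlinarith [sq_nonneg (η' - etaStar a b xstar xk)]
end
end

section
/- Let a_1, …, a_m ∈ ℝⁿ be unit vectors, b ∈ ℝ^m, x* ∈ ℝⁿ, and let 0 < c_1 ≤ c_2 < 2. Suppose an SGD method produces iterates x_{k+1} = x_k − η_k·sgn(⟨a_i, x_k⟩ − b_i)·a_i with i uniform on [m], where the step size η_k satisfies c_1 ≤ η_k/η*(x_k) ≤ c_2 at each iteration. Then there exists a constant c = c(c_1, c_2) > 0 such that for every k, E_k‖x_{k+1} − x*‖² ≤ (1 − c·(η*(x_k)/‖x_k − x*‖)²)·‖x_k − x*‖², where E_k is the expectation over the index sampled at step k and η*(x) = (1/m)·Σ_{i=1}^m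 sgn(⟨a_i, x⟩ − b_i)·⟨x − x*, a_i⟩. -/
open MeasureTheory ProbabilityTheory Finset
open scoped RealInnerProductSpace ENNReal NNReal BigOperators

noncomputable section

/-- per-iteration guarantee for SGD with a near-optimal step size
(Proposition `almostOptrate`, first part). If at the current iterate `x` the step size
`η` satisfies `c₁ ≤ η/η*(x) ≤ c₂` with `0 < c₁ ≤ c₂ < 2`, then the expected (over the
uniformly sampled row `i`) squared error after the step
`x ↦ x - η·sgn(⟨aᵢ,x⟩ - bᵢ)·aᵢ` satisfies
`E_k‖x_{k+1} - x*‖² ≤ (1 - c·(η*(x)/‖x - x*‖)²)·‖x - x*‖²` for a constant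
`c = c(c₁, c₂) > 0`. -/
theorem almostOptrate_step {m n : ℕ} (hm : 0 < m)
    (a : Fin m → EuclideanSpace ℝ (Fin n)) (ha : ∀ i, ‖a i‖ = 1)
    (b : Fin m → ℝ) (xstar : EuclideanSpace ℝ (Fin n))
    (c₁ c₂ : ℝ) (hc₁ : 0 < c₁) (hc₁₂ : c₁ ≤ c₂) (hc₂ : c₂ < 2) :
    ∃ c : ℝ, 0 < c ∧
      ∀ (x : EuclideanSpace ℝ (Fin n)) (η : ℝ),
        c₁ ≤ η / etaStar a b xstar x → η / etaStar a b xstar x ≤ c₂ →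
        ((1 : ℝ) / m) * ∑ i, ‖(x - (η * sgn (⟪a i, x⟫ - b i)) • a i) - xstar‖ ^ 2 ≤
          (1 - c * (etaStar a b xstar x / ‖x - xstar‖) ^ 2) * ‖x - xstar‖ ^ 2 := by
  set M := max (c₂ - 1) (1 - c₁) with hM
  have hM0 : 0 ≤ M := by
    rcases le_or_gt c₁ 1 with h | h
    · exact le_max_of_le_right (by linarith)
    · exact le_max_of_le_left (by linarith)
  have hM1 : M < 1 := max_lt (by linarith) (by linarith)
  refine ⟨1 - M ^ 2, by nlinarith, ?_⟩
  intro x η h₁ h₂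
  set s := etaStar a b xstar x with hs
  by_cases hs0 : s = 0
  · exfalso; rw [hs0, div_zero] at h₁; linarith
  have he : ‖x - xstar‖ ≠ 0 := by
    intro h
    apply hs0
    have hx : x - xstar = 0 := by simpa using h
    simp [hs, etaStar, hx]
  have key : ∀ i : Fin m, ‖(x - (η * sgn (⟪a i, x⟫ - b i)) • a i) - xstar‖ ^ 2
      = ‖x - xstar‖ ^ 2 - 2 * η * (sgn (⟪a i, x⟫ - b i) * ⟪x - xstar, a i⟫) + η ^ 2 := by
    intro i
    have hsg : sgn (⟪a i, x⟫ - b i) ^ 2 = 1 := by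
      unfold sgn; split <;> norm_num
    have habs : |sgn (⟪a i, x⟫ - b i)| = 1 := by
      unfold sgn; split <;> norm_num
    have h0 : (x - (η * sgn (⟪a i, x⟫ - b i)) • a i) - xstar
        = (x - xstar) - (η * sgn (⟪a i, x⟫ - b i)) • a i := by abel
    rw [h0, norm_sub_sq_real, real_inner_smul_right, norm_smul]
    rw [mul_pow, Real.norm_eq_abs, abs_mul, habs, ha i]
    ring_nf
    nlinarith [sq_nonneg η, sq_abs η]
  have hsum : ((1 : ℝ) / m) * ∑ i, ‖(x - (η * sgn (⟪a i, x⟫ - b i)) • a i) - xstar‖ ^ 2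
      = ‖x - xstar‖ ^ 2 - 2 * η * s + η ^ 2 := by
    simp only [key]
    rw [Finset.sum_add_distrib, Finset.sum_sub_distrib, ← Finset.mul_sum,
      Finset.sum_const, Finset.sum_const, Finset.card_univ, Fintype.card_fin]
    have hm' : (m : ℝ) ≠ 0 := Nat.cast_ne_zero.mpr hm.ne'
    rw [hs, etaStar]
    field_simp
    ring
  rw [hsum]
  set t := η / s with ht
  have hη : η = t * s := by rw [ht]; field_simp
  have h1t : (1 - t) ^ 2 ≤ M ^ 2 := by
    have hA : 1 - t ≤ M := le_trans (by linarith) (le_max_right _ _)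
    have hB : -(M) ≤ 1 - t := by
      have : t - 1 ≤ M := le_trans (by linarith) (le_max_left _ _)
      linarith
    nlinarith
  have hrhs : (1 - (1 - M ^ 2) * (s / ‖x - xstar‖) ^ 2) * ‖x - xstar‖ ^ 2
      = ‖x - xstar‖ ^ 2 - (1 - M ^ 2) * s ^ 2 := by
    field_simp
  rw [hrhs]
  have hkey : η ^ 2 - 2 * η * s ≤ -((1 - M ^ 2) * s ^ 2) := by
    rw [hη]
    nlinarith [sq_nonneg s, mul_nonneg (sq_nonneg s) (sub_nonneg.mpr h1t)]
  linarith
end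
end
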